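/- Let H be a graph with nonrepetitive chromatic number π(H), and construct G as follows: take a matching a_1b_1, …, a_{1000}b_{1000}; for each matching vertex x attach a copy H_x of H with x adjacent to all vertices of H_x; add adjacent vertices c, d each adjacent to all 2000 matching vertices. If π(H) + 3 ≤ 15, then π(G) ≥ π(H) + 4. -/
import Mathlib


/-- A coloring `c` of a graph `G` is nonrepetitive if no path of `G` induces a
color sequence of the form `w ++ w` with `w` nonempty. -/
def Nonrepetitive {V α : Type*} (G : SimpleGraph V) (c : V → α) : Prop :=
  ∀ (u v : V) (p : G.Walk u v), p.IsPath →
    ∀ w : List α, p.support.map c = w ++ w → w = []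

/-- The graph of Lemma `plus4`: a matching `a_i b_i` for `i < 1000` (vertices
`.inl (i, false)` and `.inl (i, true)`); for each matching vertex `x` a copy
`H_x` of `H` with `x` joined to all of `H_x`; and two adjacent vertices `c, d`
(the `.inr (.inr _)` vertices) joined to all matching vertices. -/
def plus4Graph {VH : Type*} (H : SimpleGraph VH) :
    SimpleGraph ((Fin 1000 × Bool) ⊕ (((Fin 1000 × Bool) × VH) ⊕ Fin 2)) :=
  SimpleGraph.fromRel (fun x y =>
    match x, y with
    | .inl (i, b), .inl (j, b') => i = j ∧ b ≠ b'
    | .inl m, .inr (.inl (m', _)) => m = m'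
    | .inr (.inl (m, h)), .inr (.inl (m', h')) => m = m' ∧ H.Adj h h'
    | .inl _, .inr (.inr _) => True
    | .inr (.inr i), .inr (.inr j) => i ≠ j
    | _, _ => False)

section helpers

lemma nonrep_of_comp {V α β : Type*} {G : SimpleGraph V} {c : V → α} {g : α → β}
    (h : Nonrepetitive G (g ∘ c)) : Nonrepetitive G c := by
  intro u v p hp w hw
  have h2 := h u v p hp (w.map g) (by rw [← List.map_map, hw, List.map_append])
  exact List.map_eq_nil_iff.mp h2

lemma nonrep_comp_hom {V W α : Type*} {G : SimpleGraph V} {G' : SimpleGraph W}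
    (f : G →g G') (hf : Function.Injective f) {c : W → α}
    (h : Nonrepetitive G' c) : Nonrepetitive G (c ∘ f) := by
  intro u v p hp w hw
  refine h _ _ (p.map f) (SimpleGraph.Walk.map_isPath_of_injective hf hp) w ?_
  rw [SimpleGraph.Walk.support_map, List.map_map]
  exact hw

lemma nonrep_two {V α : Type*} {G : SimpleGraph V} {c : V → α}
    (h : Nonrepetitive G c) {x y : V} (hxy : G.Adj x y) : c x ≠ c y := by
  intro he
  have := h x y (SimpleGraph.Walk.cons hxy SimpleGraph.Walk.nil)
    (by simp [SimpleGraph.Walk.cons_isPath_iff, hxy.ne]) [c x] (by simp [he])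
  simp at this

lemma nonrep_four {V α : Type*} {G : SimpleGraph V} {c : V → α}
    (h : Nonrepetitive G c) {x1 x2 x3 x4 : V}
    (h12 : G.Adj x1 x2) (h23 : G.Adj x2 x3) (h34 : G.Adj x3 x4)
    (h13 : x1 ≠ x3) (h14 : x1 ≠ x4) (h24 : x2 ≠ x4)
    (e13 : c x1 = c x3) (e24 : c x2 = c x4) : False := by
  have := h x1 x4
    (SimpleGraph.Walk.cons h12 (SimpleGraph.Walk.cons h23
      (SimpleGraph.Walk.cons h34 SimpleGraph.Walk.nil)))
    (by simp [SimpleGraph.Walk.cons_isPath_iff, h12.ne, h23.ne, h34.ne, h13, h14, h24])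
    [c x1, c x2] (by simp [← e13, ← e24])
  simp at this

variable {VH : Type*} {H : SimpleGraph VH}

lemma adj_AA (i : Fin 1000) {b b' : Bool} (hb : b ≠ b') :
    (plus4Graph H).Adj (.inl (i, b)) (.inl (i, b')) := by
  rw [plus4Graph, SimpleGraph.fromRel_adj]
  exact ⟨by simp [hb], Or.inl ⟨rfl, hb⟩⟩

lemma adj_AC (i : Fin 1000) (b : Bool) (j : Fin 2) :
    (plus4Graph H).Adj (.inl (i, b)) (.inr (.inr j)) := by
  rw [plus4Graph, SimpleGraph.fromRel_adj]
  exact ⟨by simp, Or.inl trivial⟩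

lemma adj_CD : (plus4Graph H).Adj (.inr (.inr 0)) (.inr (.inr 1)) := by
  rw [plus4Graph, SimpleGraph.fromRel_adj]
  exact ⟨by simp, Or.inl (by norm_num)⟩

lemma adj_MA (x : Fin 1000 × Bool) (v : VH) :
    (plus4Graph H).Adj (.inr (.inl (x, v))) (.inl x) := by
  rw [plus4Graph, SimpleGraph.fromRel_adj]
  exact ⟨by simp, Or.inr rfl⟩

lemma adj_MM (x : Fin 1000 × Bool) {u v : VH} (h : H.Adj u v) :
    (plus4Graph H).Adj (.inr (.inl (x, u))) (.inr (.inl (x, v))) := by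
  rw [plus4Graph, SimpleGraph.fromRel_adj]
  exact ⟨by simp [h.ne], Or.inl ⟨rfl, h⟩⟩

end helpers

/-- If `H` has nonrepetitive chromatic number `k` with `k + 3 ≤ 15`, then the
graph `G` constructed from `H` as in Lemma `plus4` satisfies `π(G) ≥ k + 4`,
i.e. `G` admits no nonrepetitive coloring with `k + 3` colors. -/

theorem stmt_14 {VH : Type*} (H : SimpleGraph VH) (k : ℕ) (hk : 1 ≤ k)
    (hH : ∃ c : VH → Fin k, Nonrepetitive H c)
    (hHmin : ¬ ∃ c : VH → Fin (k - 1), Nonrepetitive H c)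
    (hbound : k + 3 ≤ 15) :
    ¬ ∃ c : (Fin 1000 × Bool) ⊕ (((Fin 1000 × Bool) × VH) ⊕ Fin 2) → Fin (k + 3),
      Nonrepetitive (plus4Graph H) c := by
  rintro ⟨φ, hφ⟩
  -- pigeonhole: two matching edges with the same ordered color pair
  obtain ⟨i, j, hij, hfij⟩ := Fintype.exists_ne_map_eq_of_card_lt
    (fun i : Fin 1000 =>
      (φ (.inl (i, false)), φ (.inl (i, true)))) (by
        simp only [Fintype.card_prod, Fintype.card_fin]
        nlinarith)
  simp only [Prod.mk.injEq] at hfij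
  obtain ⟨haj, hbj⟩ := hfij
  replace haj := haj.symm
  replace hbj := hbj.symm
  -- abbreviations
  set ca := φ (.inl (i, false)) with hca_def
  set cb := φ (.inl (i, true)) with hcb_def
  set cc := φ (.inr (.inr (0 : Fin 2))) with hcc_def
  set cd := φ (.inr (.inr (1 : Fin 2))) with hcd_def
  have hab : ca ≠ cb := nonrep_two hφ (adj_AA i (by simp))
  have hcd' : cc ≠ cd := nonrep_two hφ adj_CD
  have hca : cc ≠ ca := by
    intro h
    exact nonrep_four hφ (adj_AC i true 0) (adj_AC j true 0).symm
      (adj_AA j (by simp)) (by simp [hij]) (by simp [hij]) (by simp)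
      hbj.symm (h.trans haj.symm)
  have hcb : cc ≠ cb := by
    intro h
    exact nonrep_four hφ (adj_AC i false 0) (adj_AC j false 0).symm
      (adj_AA j (by simp)) (by simp [hij]) (by simp [hij]) (by simp)
      haj.symm (h.trans hbj.symm)
  have hda : cd ≠ ca := by
    intro h
    exact nonrep_four hφ (adj_AC i true 1) (adj_AC j true 1).symm
      (adj_AA j (by simp)) (by simp [hij]) (by simp [hij]) (by simp)
      hbj.symm (h.trans haj.symm)
  have hdb : cd ≠ cb := by
    intro h
    exact nonrep_four hφ (adj_AC i false 1) (adj_AC j false 1).symm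
      (adj_AA j (by simp)) (by simp [hij]) (by simp [hij]) (by simp)
      haj.symm (h.trans hbj.symm)
  -- if some copy H_x avoids all four colors, we reach a contradiction
  have final : ∀ x : Fin 1000 × Bool,
      (∀ v : VH, φ (.inr (.inl (x, v))) ≠ ca ∧ φ (.inr (.inl (x, v))) ≠ cb ∧
        φ (.inr (.inl (x, v))) ≠ cc ∧ φ (.inr (.inl (x, v))) ≠ cd) → False := by
    intro x hx
    set S : Finset (Fin (k + 3)) := {ca, cb, cc, cd} with hS_def
    have h1 : ca ∉ ({cb, cc, cd} : Finset (Fin (k + 3))) := by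
      simp [hab, Ne.symm hca, Ne.symm hda]
    have h2 : cb ∉ ({cc, cd} : Finset (Fin (k + 3))) := by
      simp [Ne.symm hcb, Ne.symm hdb]
    have h3 : cc ∉ ({cd} : Finset (Fin (k + 3))) := by simp [hcd']
    have hScard : S.card = 4 := by
      rw [hS_def, Finset.card_insert_of_notMem h1,
        Finset.card_insert_of_notMem h2, Finset.card_insert_of_notMem h3,
        Finset.card_singleton]
    have hcompl : Sᶜ.card = k - 1 := by
      rw [Finset.card_compl, hScard]
      simp only [Fintype.card_fin]
      omega
    let e := Finset.equivFinOfCardEq hcompl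
    have hmem : ∀ v : VH, φ (.inr (.inl (x, v))) ∈ Sᶜ := by
      intro v
      obtain ⟨ha, hb, hc, hd⟩ := hx v
      simp [S, Finset.mem_compl, ha, hb, hc, hd]
    let θ : VH → {y // y ∈ Sᶜ} := fun v => ⟨φ (.inr (.inl (x, v))), hmem v⟩
    let f : H →g plus4Graph H :=
      ⟨fun v => .inr (.inl (x, v)), fun h => adj_MM x h⟩
    have hfinj : Function.Injective f := by
      intro a b hab'
      have h' : (Sum.inr (Sum.inl (x, a)) :
          (Fin 1000 × Bool) ⊕ (((Fin 1000 × Bool) × VH) ⊕ Fin 2)) =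
          Sum.inr (Sum.inl (x, b)) := hab'
      simpa using h'
    have hψ : Nonrepetitive H (φ ∘ f) := nonrep_comp_hom f hfinj hφ
    have hθ : Nonrepetitive H θ :=
      nonrep_of_comp (g := Subtype.val) hψ
    refine hHmin ⟨fun v => e (θ v), ?_⟩
    have hfun : (⇑e.symm ∘ fun v => e (θ v)) = θ :=
      funext fun v => e.symm_apply_apply _
    refine nonrep_of_comp (g := ⇑e.symm) ?_
    rw [hfun]
    exact hθ
  by_cases hcase : ∀ u : VH, φ (.inr (.inl ((i, false), u))) ≠ cb
  · refine final (i, false) fun v => ⟨nonrep_two hφ (adj_MA (i, false) v), hcase v, ?_, ?_⟩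
    · intro h
      exact nonrep_four hφ (adj_MA (i, false) v) (adj_AC i false 0)
        (adj_AC j false 0).symm (by simp) (by simp) (by simp [hij]) h haj.symm
    · intro h
      exact nonrep_four hφ (adj_MA (i, false) v) (adj_AC i false 1)
        (adj_AC j false 1).symm (by simp) (by simp) (by simp [hij]) h haj.symm
  · push_neg at hcase
    obtain ⟨u₀, hu₀⟩ := hcase
    refine final (i, true) fun v => ⟨?_, nonrep_two hφ (adj_MA (i, true) v), ?_, ?_⟩
    · intro h
      exact nonrep_four hφ (adj_MA (i, false) u₀) (adj_AA i (by simp))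
        (adj_MA (i, true) v).symm (by simp) (by simp) (by simp) hu₀ h.symm
    · intro h
      exact nonrep_four hφ (adj_MA (i, true) v) (adj_AC i true 0)
        (adj_AC j true 0).symm (by simp) (by simp) (by simp [hij]) h hbj.symm
    · intro h
      exact nonrep_four hφ (adj_MA (i, true) v) (adj_AC i true 1)
        (adj_AC j true 1).symm (by simp) (by simp) (by simp [hij]) h hbj.symm
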